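/- Under the m-component model (A1)–(A4) with n > m fixed, and assuming υ_O² := lim_{d→∞} d^{-1} Σ_{i=m+1}^d λ_i² exists, for every k = 1,…,n the error term ε_{k*} = Σ_{i=m+1}^d w_{i*}(û_kᵀu_i) is stochastically bounded as d → ∞: ε_{k*} = O_p(1). -/

import Mathlib

open MeasureTheory ProbabilityTheory Filter

noncomputable section

/-- `Y d = O_p(a d)` as `d → ∞`: for every `ε > 0` there exist `M` and `d₀` such that
`P(|Y d| > M * a d) < ε` for all `d ≥ d₀`. -/
def IsOp {Ω : Type*} [MeasurableSpace Ω] (P : Measure Ω) (Y : ℕ → Ω → ℝ) (a : ℕ → ℝ) : Prop :=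
  ∀ ε : ℝ, 0 < ε → ∃ M : ℝ, ∃ d₀ : ℕ, ∀ d, d₀ ≤ d →
    P {ω | M * a d < |Y d ω|} < ENNReal.ofReal ε

/-- Convergence in probability to a (possibly random) limit `c`. -/
def TendstoInProb {Ω : Type*} [MeasurableSpace Ω] (P : Measure Ω) (Y : ℕ → Ω → ℝ)
    (c : Ω → ℝ) : Prop :=
  ∀ ε : ℝ, 0 < ε → Tendsto (fun d => P {ω | ε < |Y d ω - c ω|}) atTop (nhds 0)

/-- The `m`-component model (A1)–(A4) with fixed sample size `n`, together with, for each
dimension `d`, the eigenvalue–eigenvector pairs `(λ̂_k, û_k)` of the sample covariance matrix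
`S_d = n⁻¹ X Xᵀ`. -/
structure PCAModel {Ω : Type*} [MeasurableSpace Ω] (P : Measure Ω) (n m : ℕ) where
  hnm : m < n
  /-- spike strengths σ_i², `i < m` (0-indexed) -/
  σ2 : ℕ → ℝ
  hσ2_pos : ∀ i, i < m → 0 < σ2 i
  hσ2_mono : ∀ i j, i ≤ j → j < m → σ2 j ≤ σ2 i
  /-- `lam d i` : the `i`-th population principal component variance in dimension `d` -/
  lam : ℕ → ℕ → ℝ
  hlam_nonneg : ∀ d i, 0 ≤ lam d i
  hlam_mono : ∀ d i j, i ≤ j → lam d j ≤ lam d i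
  /-- (A1) -/
  hA1 : ∀ d i, i < m → lam d i = σ2 i * d
  τ2 : ℝ
  hτ2_pos : 0 < τ2
  /-- (A2) -/
  hA2 : Tendsto (fun d : ℕ => (∑ i ∈ Finset.Ico m d, lam d i) / d) atTop (nhds τ2)
  /-- (A3) -/
  hA3 : ∃ B : ℝ, ∀ i, m ≤ i → ∀ᶠ d in atTop, lam d i < B
  /-- normalized scores `z i j`, `i : ℕ`, `j : Fin n` -/
  z : ℕ → Fin n → Ω → ℝ
  hz_meas : ∀ i j, Measurable (z i j)
  /-- (A4): joint independence of all normalized scores -/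
  hz_indep : iIndepFun (fun p : ℕ × Fin n => z p.1 p.2) P
  hz_mean : ∀ i j, ∫ ω, z i j ω ∂P = 0
  hz_var : ∀ i j, ∫ ω, (z i j ω) ^ 2 ∂P = 1
  hz_mem4 : ∀ i j, MemLp (z i j) 4 P
  /-- (A4): uniformly bounded fourth moments -/
  hz_four : ∃ C : ℝ, ∀ i j, ∫ ω, (z i j ω) ^ 4 ∂P ≤ C
  /-- population principal component directions: an orthonormal basis of `ℝ^d` -/
  u : (d : ℕ) → Fin d → EuclideanSpace ℝ (Fin d)
  hu : ∀ d, Orthonormal ℝ (u d)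
  /-- the observations `X_j` in dimension `d` -/
  Xvec : (d : ℕ) → Fin n → Ω → EuclideanSpace ℝ (Fin d)
  hX : ∀ d j ω, Xvec d j ω = ∑ i : Fin d, (Real.sqrt (lam d i) * z i (j : Fin n) ω) • u d i
  /-- sample principal component variances -/
  lamhat : (d : ℕ) → Fin n → Ω → ℝ
  /-- sample principal component directions -/
  uhat : (d : ℕ) → Fin n → Ω → EuclideanSpace ℝ (Fin d)
  hlamhat_mono : ∀ d ω (k l : Fin n), k ≤ l → lamhat d l ω ≤ lamhat d k ω
  hlamhat_nonneg : ∀ d ω k, 0 ≤ lamhat d k ω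
  huhat_unit : ∀ d ω k, ‖uhat d k ω‖ = 1
  huhat_orth : ∀ d, n ≤ d → ∀ ω (k l : Fin n), k ≠ l →
    (inner ℝ (uhat d k ω) (uhat d l ω) : ℝ) = 0
  /-- `(λ̂_k, û_k)` are eigenpairs of `S_d = n⁻¹ ∑_j X_j X_jᵀ` -/
  heig : ∀ d, n ≤ d → ∀ (k : Fin n) ω,
    (n : ℝ)⁻¹ • ∑ j : Fin n, (inner ℝ (Xvec d j ω) (uhat d k ω) : ℝ) • Xvec d j ω
      = lamhat d k ω • uhat d k ω
  /-- vectors orthogonal to all the `û_k` are annihilated by `S_d`, so that `û_1,…,û_n` carry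
  all of the spectrum of `S_d` -/
  heig_complete : ∀ d, n ≤ d → ∀ ω (v : EuclideanSpace ℝ (Fin d)),
    (∀ k : Fin n, (inner ℝ (uhat d k ω) v : ℝ) = 0) →
    (n : ℝ)⁻¹ • ∑ j : Fin n, (inner ℝ (Xvec d j ω) v : ℝ) • Xvec d j ω = 0
  /-- the sample eigenpairs are functions of the data -/
  hlamhat_meas : ∀ d k, Measurable[MeasurableSpace.comap
    (fun ω => fun p : ℕ × Fin n => z p.1 p.2 ω) inferInstance] (lamhat d k)
  huhat_meas : ∀ d k, Measurable[MeasurableSpace.comap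
    (fun ω => fun p : ℕ × Fin n => z p.1 p.2 ω) inferInstance] (uhat d k)

namespace PCAModel

variable {Ω : Type*} [MeasurableSpace Ω] {P : Measure Ω} {n m : ℕ}

/-- The `m × m` matrix `W = W₁ W₁ᵀ`, where `W₁` has entries `σ_i z_{ij}`. -/
def Wmat (M : PCAModel P n m) (ω : Ω) : Fin m → Fin m → ℝ := fun i i' =>
  ∑ j : Fin n, (Real.sqrt (M.σ2 i) * M.z i j ω) * (Real.sqrt (M.σ2 i') * M.z i' j ω)

/-- The σ-algebra generated by `W₁`. -/
def G (M : PCAModel P n m) : MeasurableSpace Ω :=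
  MeasurableSpace.comap
    (fun ω => fun p : Fin m × Fin n => Real.sqrt (M.σ2 p.1) * M.z p.1 p.2 ω) inferInstance

end PCAModel

/-- The model together with an additional independent observation `X_*`. -/
structure PCAModelStar {Ω : Type*} [MeasurableSpace Ω] (P : Measure Ω) (n m : ℕ)
    extends PCAModel P n m where
  /-- normalized scores of the new observation -/
  zstar : ℕ → Ω → ℝ
  hzstar_meas : ∀ i, Measurable (zstar i)
  hzstar_mean : ∀ i, ∫ ω, zstar i ω ∂P = 0
  hzstar_var : ∀ i, ∫ ω, (zstar i ω) ^ 2 ∂P = 1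
  hzstar_mem4 : ∀ i, MemLp (zstar i) 4 P
  hzstar_four : ∃ C : ℝ, ∀ i, ∫ ω, (zstar i ω) ^ 4 ∂P ≤ C
  /-- all scores (of the data and of the new observation) are jointly independent -/
  hall_indep : iIndepFun
    (fun p : ℕ × Option (Fin n) => fun ω => (p.2).elim (zstar p.1 ω) (fun j => z p.1 j ω)) P
  /-- the new observation `X_*` -/
  Xstar : (d : ℕ) → Ω → EuclideanSpace ℝ (Fin d)
  hXstar : ∀ d ω, Xstar d ω = ∑ i : Fin d, (Real.sqrt (lam d i) * zstar i ω) • u d i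


namespace PCAModelStar

variable {Ω : Type*} [MeasurableSpace Ω] {P : Measure Ω} {n m : ℕ}

/-- All scores (data and new observation) as a single family. -/
def PF (M : PCAModelStar P n m) : ℕ × Option (Fin n) → Ω → ℝ :=
  fun p ω => (p.2).elim (M.zstar p.1 ω) (fun j => M.z p.1 j ω)

lemma PF_meas (M : PCAModelStar P n m) (p : ℕ × Option (Fin n)) : Measurable (M.PF p) := by
  rcases p with ⟨i, _ | j⟩
  · exact M.hzstar_meas i
  · exact M.hz_meas i j

/-- The σ-algebra generated by all scores except `zstar i`. -/
def restAlg (M : PCAModelStar P n m) (i : ℕ) : MeasurableSpace Ω :=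
  ⨆ p ∈ ({(i, (none : Option (Fin n)))}ᶜ : Set (ℕ × Option (Fin n))),
    MeasurableSpace.comap (M.PF p) inferInstance

lemma restAlg_le (M : PCAModelStar P n m) (i : ℕ) : M.restAlg i ≤ ‹MeasurableSpace Ω› :=
  iSup₂_le fun p _ => (M.PF_meas p).comap_le

lemma indep_restAlg (M : PCAModelStar P n m) (i : ℕ) :
    ProbabilityTheory.Indep (MeasurableSpace.comap (M.zstar i) inferInstance) (M.restAlg i) P := by
  have h := ProbabilityTheory.indep_biSup_compl
    (fun p => (M.PF_meas p).comap_le) M.hall_indep.iIndep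
    ({(i, (none : Option (Fin n)))} : Set (ℕ × Option (Fin n)))
  have e1 : (⨆ p ∈ ({(i, (none : Option (Fin n)))} : Set (ℕ × Option (Fin n))),
      MeasurableSpace.comap (M.PF p) inferInstance)
      = MeasurableSpace.comap (M.zstar i) inferInstance := by
    have : (⨆ p ∈ ({(i, (none : Option (Fin n)))} : Set (ℕ × Option (Fin n))),
        MeasurableSpace.comap (M.PF p) inferInstance)
        = MeasurableSpace.comap (M.PF (i, none)) inferInstance := by simp
    rw [this]; rfl
  rw [← e1]
  exact h

lemma zstar_meas_rest (M : PCAModelStar P n m) {i i' : ℕ} (hne : i' ≠ i) :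
    Measurable[M.restAlg i] (M.zstar i') := by
  have h1 : Measurable[MeasurableSpace.comap (M.PF (i', none)) inferInstance]
      (M.PF (i', none)) := Measurable.of_comap_le le_rfl
  exact h1.mono (le_biSup (fun p : ℕ × Option (Fin n) =>
    MeasurableSpace.comap (M.PF p) inferInstance)
    (show ((i', none) : ℕ × Option (Fin n)) ∈ _ by simp [hne])) le_rfl

lemma bigZ_meas_rest (M : PCAModelStar P n m) (i : ℕ) :
    Measurable[M.restAlg i] (fun ω => fun p : ℕ × Fin n => M.z p.1 p.2 ω) := by
  refine @measurable_pi_lambda Ω (ℕ × Fin n) (fun _ => ℝ) (M.restAlg i) _ _ ?_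
  intro q
  have h1 : Measurable[MeasurableSpace.comap (M.PF (q.1, some q.2)) inferInstance]
      (M.PF (q.1, some q.2)) := Measurable.of_comap_le le_rfl
  exact h1.mono (le_biSup (fun p : ℕ × Option (Fin n) =>
    MeasurableSpace.comap (M.PF p) inferInstance)
    (show ((q.1, some q.2) : ℕ × Option (Fin n)) ∈ _ by simp)) le_rfl

lemma uhat_meas_rest (M : PCAModelStar P n m) (i d : ℕ) (k : Fin n) :
    Measurable[M.restAlg i] (M.uhat d k) :=
  (M.huhat_meas d k).mono (M.bigZ_meas_rest i).comap_le le_rfl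

lemma uhat_meas (M : PCAModelStar P n m) (d : ℕ) (k : Fin n) :
    Measurable (M.uhat d k) :=
  (M.uhat_meas_rest 0 d k).mono (M.restAlg_le 0) le_rfl

end PCAModelStar

lemma indepFun_of_indep_of_meas {Ω : Type*} [MeasurableSpace Ω] {P : Measure Ω}
    {m1 m2 : MeasurableSpace Ω} (h : ProbabilityTheory.Indep m1 m2 P) {f g : Ω → ℝ}
    (hf : Measurable[m1] f) (hg : Measurable[m2] g) :
    ProbabilityTheory.IndepFun f g P := by
  rw [ProbabilityTheory.IndepFun_iff_Indep]
  exact ProbabilityTheory.indep_of_indep_of_le_left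
    (ProbabilityTheory.indep_of_indep_of_le_right h hg.comap_le) hf.comap_le

/-- Lemma 2, last claim: under the m-component model (A1)–(A4) with
`n > m` fixed, if `υ_O² = lim_d d⁻¹ ∑_{i>m} λ_i²` exists, then for every `k = 1,…,n` the
error term `ε_{k*} = ∑_{i=m+1}^d w_{i*}(û_kᵀu_i)` is `O_p(1)` as `d → ∞`. -/
theorem statement10 {Ω : Type*} [MeasurableSpace Ω] (P : Measure Ω) [IsProbabilityMeasure P]
    (n m : ℕ) (M : PCAModelStar P n m)
    (υ2 : ℝ)
    (hυ2 : Tendsto (fun d : ℕ => (∑ i ∈ Finset.Ico m d, (M.lam d i) ^ 2) / d)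
      atTop (nhds υ2))
    (k : Fin n) :
    IsOp P
      (fun d ω =>
        ∑ i ∈ Finset.univ.filter (fun i : Fin d => m ≤ (i : ℕ)),
          (Real.sqrt (M.lam d i) * M.zstar i ω) * (inner ℝ (M.uhat d k ω) (M.u d i) : ℝ))
      (fun _ => 1) := by
  classical
  intro ε' hε'
  obtain ⟨B, hB⟩ := M.hA3
  obtain ⟨d₀, hd₀⟩ := Filter.eventually_atTop.mp (hB m le_rfl)
  set B' : ℝ := max B 1 with hB'def
  have hB'pos : (0 : ℝ) < B' := lt_of_lt_of_le one_pos (le_max_right _ _)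
  set Mc : ℝ := Real.sqrt (2 * B' / ε') with hMcdef
  have hMc2 : Mc ^ 2 = 2 * B' / ε' := Real.sq_sqrt (by positivity)
  have hMcpos : 0 < Mc := Real.sqrt_pos.mpr (by positivity)
  refine ⟨Mc, d₀, fun d hd => ?_⟩
  -- abbreviations
  set a : Fin d → Ω → ℝ := fun l ω => (inner ℝ (M.uhat d k ω) (M.u d l) : ℝ) with ha_def
  set c : Fin d → Ω → ℝ :=
    fun l ω => (Real.sqrt (M.lam d l) * M.zstar l ω) * a l ω with hc_def
  set T : Finset (Fin d) := Finset.univ.filter (fun i : Fin d => m ≤ (i : ℕ)) with hT_def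
  set Y : Ω → ℝ := fun ω => ∑ l ∈ T, c l ω with hY_def
  -- basic facts
  have hzstar_int : ∀ i : ℕ, Integrable (M.zstar i) P := fun i =>
    (M.hzstar_mem4 i).integrable (by norm_num)
  have hzstar_sq_int : ∀ i : ℕ, Integrable (fun ω => M.zstar i ω ^ 2) P := fun i =>
    ((M.hzstar_mem4 i).mono_exponent (by norm_num)).integrable_sq
  have ha_meas_rest : ∀ (i : ℕ) (l : Fin d), Measurable[M.restAlg i] (a l) := fun i l => by
    rw [ha_def]
    exact (M.uhat_meas_rest i d k).inner measurable_const
  have ha_meas : ∀ l, Measurable (a l) :=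
    fun l => (ha_meas_rest 0 l).mono (M.restAlg_le 0) le_rfl
  have ha_bdd : ∀ l ω, |a l ω| ≤ 1 := by
    intro l ω
    have h := abs_real_inner_le_norm (M.uhat d k ω) (M.u d l)
    rw [M.huhat_unit d ω k, (M.hu d).1 l, one_mul] at h
    exact h
  have ha_sq_int : ∀ l, Integrable (fun ω => a l ω ^ 2) P := by
    intro l
    refine (integrable_const (1 : ℝ)).mono' ((ha_meas l).pow_const 2).aestronglyMeasurable
      (Filter.Eventually.of_forall fun ω => ?_)
    rw [Real.norm_eq_abs, abs_pow]
    calc |a l ω| ^ 2 ≤ 1 ^ 2 := pow_le_pow_left₀ (abs_nonneg _) (ha_bdd l ω) 2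
      _ = 1 := one_pow 2
  have hc_meas : ∀ l, Measurable (c l) := fun l => by
    rw [hc_def]
    exact (measurable_const.mul (M.hzstar_meas l)).mul (ha_meas l)
  -- diagonal terms
  have hdiag : ∀ l : Fin d, Integrable (fun ω => c l ω * c l ω) P ∧
      ∫ ω, c l ω * c l ω ∂P = M.lam d l * ∫ ω, a l ω ^ 2 ∂P := by
    intro l
    have hsq : Real.sqrt (M.lam d (l : ℕ)) * Real.sqrt (M.lam d (l : ℕ)) = M.lam d (l : ℕ) :=
      Real.mul_self_sqrt (M.hlam_nonneg d l)
    have heq : (fun ω => c l ω * c l ω)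
        = fun ω => M.lam d (l : ℕ) * (a l ω ^ 2 * M.zstar (l : ℕ) ω ^ 2) := by
      funext ω
      simp only [hc_def]
      rw [show (Real.sqrt (M.lam d (l : ℕ)) * M.zstar (l : ℕ) ω * a l ω)
          * (Real.sqrt (M.lam d (l : ℕ)) * M.zstar (l : ℕ) ω * a l ω)
          = (Real.sqrt (M.lam d (l : ℕ)) * Real.sqrt (M.lam d (l : ℕ)))
            * (a l ω ^ 2 * M.zstar (l : ℕ) ω ^ 2) from by ring, hsq]
    have hindep : IndepFun (fun ω => a l ω ^ 2) (fun ω => M.zstar (l : ℕ) ω ^ 2) P :=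
      (indepFun_of_indep_of_meas (M.indep_restAlg (l : ℕ))
        ((Measurable.of_comap_le le_rfl).pow_const 2)
        ((ha_meas_rest (l : ℕ) l).pow_const 2)).symm
    have hprod_int : Integrable (fun ω => a l ω ^ 2 * M.zstar (l : ℕ) ω ^ 2) P := by
      refine (hzstar_sq_int (l : ℕ)).bdd_mul ((ha_meas l).pow_const 2).aestronglyMeasurable
        (Filter.Eventually.of_forall (fun ω => (?_ : _ ≤ (1:ℝ))))
      rw [Real.norm_eq_abs, abs_pow]
      calc |a l ω| ^ 2 ≤ 1 ^ 2 := pow_le_pow_left₀ (abs_nonneg _) (ha_bdd l ω) 2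
        _ = 1 := one_pow 2
    constructor
    · rw [heq]
      exact hprod_int.const_mul _
    · rw [heq, integral_const_mul, hindep.integral_fun_mul_eq_mul_integral
        ((ha_meas l).pow_const 2).aestronglyMeasurable
        ((M.hzstar_meas (l : ℕ)).pow_const 2).aestronglyMeasurable,
        M.hzstar_var (l : ℕ), mul_one]
  -- cross terms
  have hcross : ∀ l l' : Fin d, (l : ℕ) ≠ (l' : ℕ) →
      Integrable (fun ω => c l ω * c l' ω) P ∧ ∫ ω, c l ω * c l' ω ∂P = 0 := by
    intro l l' hne
    set h : Ω → ℝ := fun ω => (a l ω * a l' ω) *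
      ((Real.sqrt (M.lam d (l : ℕ)) * Real.sqrt (M.lam d (l' : ℕ))) * M.zstar (l' : ℕ) ω)
      with hh_def
    have hmeas_rest : Measurable[M.restAlg (l : ℕ)] h := by
      rw [hh_def]
      exact ((ha_meas_rest (l : ℕ) l).mul (ha_meas_rest (l : ℕ) l')).mul
        ((M.zstar_meas_rest hne.symm).const_mul _)
    have hindep : IndepFun (M.zstar (l : ℕ)) h P :=
      indepFun_of_indep_of_meas (M.indep_restAlg (l : ℕ))
        (Measurable.of_comap_le le_rfl) hmeas_rest
    have hmeas : Measurable h := hmeas_rest.mono (M.restAlg_le _) le_rfl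
    have hint : Integrable h P := by
      rw [hh_def]
      refine ((hzstar_int (l' : ℕ)).const_mul _).bdd_mul
        ((ha_meas l).mul (ha_meas l')).aestronglyMeasurable (Filter.Eventually.of_forall (fun ω => (?_ : _ ≤ (1:ℝ))))
      rw [Real.norm_eq_abs, abs_mul]
      calc |a l ω| * |a l' ω| ≤ 1 * 1 :=
        mul_le_mul (ha_bdd l ω) (ha_bdd l' ω) (abs_nonneg _) zero_le_one
        _ = 1 := one_mul 1
    have heq : (fun ω => c l ω * c l' ω) = fun ω => M.zstar (l : ℕ) ω * h ω := by
      funext ω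
      simp only [hc_def, hh_def]
      ring
    constructor
    · rw [heq]
      exact hindep.integrable_mul (hzstar_int (l : ℕ)) hint
    · rw [heq, hindep.integral_fun_mul_eq_mul_integral (M.hzstar_meas (l : ℕ)).aestronglyMeasurable
        hmeas.aestronglyMeasurable, M.hzstar_mean (l : ℕ), zero_mul]
  have hint2 : ∀ l l' : Fin d, Integrable (fun ω => c l ω * c l' ω) P := by
    intro l l'
    by_cases hll : (l : ℕ) = (l' : ℕ)
    · have : l = l' := Fin.ext hll
      subst this
      exact (hdiag l).1
    · exact (hcross l l' hll).1
  -- second moment of Y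
  have hY2eq : (fun ω => Y ω ^ 2) = fun ω => ∑ l ∈ T, ∑ l' ∈ T, c l ω * c l' ω := by
    funext ω
    rw [hY_def]
    simp only [sq]
    rw [Finset.sum_mul_sum]
  have hY2int : Integrable (fun ω => Y ω ^ 2) P := by
    rw [hY2eq]
    exact integrable_finset_sum T fun l _ => integrable_finset_sum T fun l' _ => hint2 l l'
  have hY2val : ∫ ω, Y ω ^ 2 ∂P = ∑ l ∈ T, M.lam d l * ∫ ω, a l ω ^ 2 ∂P := by
    rw [hY2eq, integral_finset_sum T
      (fun l _ => integrable_finset_sum T fun l' _ => hint2 l l')]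
    refine Finset.sum_congr rfl fun l hl => ?_
    rw [integral_finset_sum T (fun l' _ => hint2 l l')]
    have hterm : ∀ l' ∈ T, ∫ ω, c l ω * c l' ω ∂P
        = if l = l' then M.lam d l * ∫ ω, a l ω ^ 2 ∂P else 0 := by
      intro l' _
      by_cases hll : l = l'
      · subst hll
        rw [if_pos rfl]
        exact (hdiag l).2
      · rw [if_neg hll]
        exact (hcross l l' (fun hv => hll (Fin.ext hv))).2
    rw [Finset.sum_congr rfl hterm, Finset.sum_ite_eq, if_pos hl]
  -- Bessel bound
  have hbessel : ∀ ω, ∑ l ∈ T, a l ω ^ 2 ≤ 1 := by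
    intro ω
    have hb := Orthonormal.sum_inner_products_le (s := T) (M.uhat d k ω) (M.hu d)
    rw [M.huhat_unit d ω k, one_pow] at hb
    refine le_trans (le_of_eq (Finset.sum_congr rfl fun l _ => ?_)) hb
    rw [real_inner_comm, ha_def, Real.norm_eq_abs, sq_abs]
  have hbessel_int : ∫ ω, ∑ l ∈ T, a l ω ^ 2 ∂P ≤ 1 := by
    calc ∫ ω, ∑ l ∈ T, a l ω ^ 2 ∂P ≤ ∫ _ω, (1 : ℝ) ∂P :=
        integral_mono (integrable_finset_sum T fun l _ => ha_sq_int l)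
          (integrable_const 1) hbessel
      _ = 1 := by simp
  -- the variance bound
  have hIbound : ∫ ω, Y ω ^ 2 ∂P ≤ B' := by
    rw [hY2val]
    have hlamm : M.lam d m < B' := lt_of_lt_of_le (hd₀ d hd) (le_max_left _ _)
    calc ∑ l ∈ T, M.lam d l * ∫ ω, a l ω ^ 2 ∂P
        ≤ ∑ l ∈ T, M.lam d m * ∫ ω, a l ω ^ 2 ∂P := by
          refine Finset.sum_le_sum fun l hl => ?_
          have hml : m ≤ (l : ℕ) := by
            rw [hT_def] at hl
            simpa using (Finset.mem_filter.mp hl).2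
          exact mul_le_mul_of_nonneg_right (M.hlam_mono d m l hml)
            (integral_nonneg fun ω => sq_nonneg _)
      _ = M.lam d m * ∑ l ∈ T, ∫ ω, a l ω ^ 2 ∂P := by rw [Finset.mul_sum]
      _ = M.lam d m * ∫ ω, ∑ l ∈ T, a l ω ^ 2 ∂P := by
          rw [integral_finset_sum T fun l _ => ha_sq_int l]
      _ ≤ M.lam d m * 1 := mul_le_mul_of_nonneg_left hbessel_int (M.hlam_nonneg d m)
      _ ≤ B' := by rw [mul_one]; exact hlamm.le
  -- Markov / Chebyshev
  have hmarkov := mul_meas_ge_le_integral_of_nonneg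
    (Filter.Eventually.of_forall fun ω => sq_nonneg (Y ω)) hY2int (Mc ^ 2)
  set S : Set Ω := {x | Mc ^ 2 ≤ Y x ^ 2} with hS_def
  have hsub : {ω | Mc * 1 < |Y ω|} ⊆ S := by
    intro ω hω
    have h1 : Mc ≤ |Y ω| := by
      have := Set.mem_setOf_eq ▸ hω
      rw [mul_one] at this
      exact this.le
    show Mc ^ 2 ≤ Y ω ^ 2
    calc Mc ^ 2 ≤ |Y ω| ^ 2 := pow_le_pow_left₀ hMcpos.le h1 2
      _ = Y ω ^ 2 := sq_abs _
  have htoReal : (P S).toReal ≤ ε' / 2 := by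
    have h2 : Mc ^ 2 * (P S).toReal ≤ B' := le_trans hmarkov hIbound
    rw [hMc2] at h2
    have h3 : (P S).toReal ≤ B' / (2 * B' / ε') := by
      rw [le_div_iff₀ (by positivity)]
      linarith [h2]
    calc (P S).toReal ≤ B' / (2 * B' / ε') := h3
      _ = ε' / 2 := by
        field_simp
  have hle : P {ω | Mc * 1 < |Y ω|} ≤ ENNReal.ofReal (ε' / 2) := by
    refine le_trans (measure_mono hsub) ?_
    rw [ENNReal.le_ofReal_iff_toReal_le (measure_ne_top P S) (by positivity)]
    exact htoReal
  exact lt_of_le_of_lt hle ((ENNReal.ofReal_lt_ofReal_iff hε').mpr (half_lt_self hε'))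

end
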